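/- Let n ≥ 1. The set G of linear maps L : Matrix (Fin n) ℂ →ₗ[ℂ] Matrix (Fin n) ℂ such that for every t ≥ 0 the map exp(t • L) is positive, trace-preserving and unital, is a convex cone: if L₁, L₂ ∈ G and a, b ≥ 0 are real numbers, then a • L₁ + b • L₂ ∈ G. Likewise, the subset of G consisting of those L such that exp(t • L) is in addition completely positive for all t ≥ 0 is a convex cone contained in G. -/

import Mathlib

open scoped Matrix ComplexOrder

/-- A density matrix: positive semidefinite with unit trace. -/
def IsDensityMatrix {n : ℕ} (ρ : Matrix (Fin n) (Fin n) ℂ) : Prop :=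
  ρ.PosSemidef ∧ ρ.trace = 1

/-- The (real) eigenvalues of a matrix, via its Hermitian spectral decomposition
(junk value `0` if the matrix is not Hermitian). -/
noncomputable def eigs {n : ℕ} (A : Matrix (Fin n) (Fin n) ℂ) : Fin n → ℝ :=
  if h : A.IsHermitian then h.eigenvalues else 0

/-- A linear map on matrices is positive if it preserves positive semidefiniteness. -/
def IsPositiveMap {n : ℕ}
    (Φ : Matrix (Fin n) (Fin n) ℂ →ₗ[ℂ] Matrix (Fin n) (Fin n) ℂ) : Prop :=
  ∀ A : Matrix (Fin n) (Fin n) ℂ, A.PosSemidef → (Φ A).PosSemidef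

/-- A linear map on matrices is trace-preserving if it preserves the trace. -/
def IsTracePreserving {n : ℕ}
    (Φ : Matrix (Fin n) (Fin n) ℂ →ₗ[ℂ] Matrix (Fin n) (Fin n) ℂ) : Prop :=
  ∀ A : Matrix (Fin n) (Fin n) ℂ, (Φ A).trace = A.trace


/-- The exponential of an endomorphism of the finite-dimensional space of matrices,
computed via the exponential of its matrix representation in the standard basis. -/
noncomputable def expEnd {n : ℕ}
    (L : Matrix (Fin n) (Fin n) ℂ →ₗ[ℂ] Matrix (Fin n) (Fin n) ℂ) :
    Matrix (Fin n) (Fin n) ℂ →ₗ[ℂ] Matrix (Fin n) (Fin n) ℂ :=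
  Matrix.toLin (Matrix.stdBasis ℂ (Fin n) (Fin n)) (Matrix.stdBasis ℂ (Fin n) (Fin n))
    (NormedSpace.exp
      (LinearMap.toMatrix (Matrix.stdBasis ℂ (Fin n) (Fin n))
        (Matrix.stdBasis ℂ (Fin n) (Fin n)) L))


/-- The Choi matrix of a linear map on matrices. -/
def ChoiMatrix {n : ℕ}
    (Φ : Matrix (Fin n) (Fin n) ℂ →ₗ[ℂ] Matrix (Fin n) (Fin n) ℂ) :
    Matrix (Fin n × Fin n) (Fin n × Fin n) ℂ :=
  Matrix.of fun ac bd => (Φ (Matrix.single ac.1 bd.1 1)) ac.2 bd.2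

/-- A linear map on matrices is completely positive if its Choi matrix is
positive semidefinite. -/
def IsCompletelyPositive {n : ℕ}
    (Φ : Matrix (Fin n) (Fin n) ℂ →ₗ[ℂ] Matrix (Fin n) (Fin n) ℂ) : Prop :=
  (ChoiMatrix Φ).PosSemidef

/-- Membership in the set `G` of generators of semigroups of positive,
trace-preserving, unital maps. -/
def InGenCone {n : ℕ}
    (L : Matrix (Fin n) (Fin n) ℂ →ₗ[ℂ] Matrix (Fin n) (Fin n) ℂ) : Prop :=
  ∀ t : ℝ, 0 ≤ t →
    IsPositiveMap (expEnd (t • L)) ∧ IsTracePreserving (expEnd (t • L)) ∧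
      expEnd (t • L) 1 = 1

/-- Membership in the subset of `G` of generators whose semigroups are in addition
completely positive. -/
def InGenConeCP {n : ℕ}
    (L : Matrix (Fin n) (Fin n) ℂ →ₗ[ℂ] Matrix (Fin n) (Fin n) ℂ) : Prop :=
  InGenCone L ∧ ∀ t : ℝ, 0 ≤ t → IsCompletelyPositive (expEnd (t • L))

section TrotterAux
open NormedSpace Filter

variable {N : Type*} [Fintype N] [DecidableEq N] [Nonempty N]


variable {N : Type*} [Fintype N] [DecidableEq N] [Nonempty N]

-- norm of exp bound in a normed algebra
lemma norm_exp_le_exp_norm' {𝔸 : Type*} [NormedRing 𝔸] [NormedAlgebra ℂ 𝔸]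
    [CompleteSpace 𝔸] [NormOneClass 𝔸] (x : 𝔸) :
    ‖exp x‖ ≤ Real.exp ‖x‖ := by
  rw [exp_eq_tsum ℂ]
  refine (norm_tsum_le_tsum_norm (norm_expSeries_summable' (𝕂 := ℂ) x)).trans ?_
  rw [Real.exp_eq_exp_ℝ, exp_eq_tsum ℝ]
  refine Summable.tsum_le_tsum (fun n => ?_) (norm_expSeries_summable' (𝕂 := ℂ) x)
    (expSeries_summable' (𝕂 := ℝ) ‖x‖)
  rw [norm_smul, smul_eq_mul]
  rcases Nat.eq_zero_or_pos n with rfl | hn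
  · simp
  · have h1 : ‖((n.factorial : ℂ))⁻¹‖ = ((n.factorial : ℝ))⁻¹ := by
      rw [norm_inv]
      simp
    rw [h1]
    exact mul_le_mul_of_nonneg_left (norm_pow_le' x hn) (by positivity)


lemma pow_sub_pow_norm_le' {𝔸 : Type*} [NormedRing 𝔸] [NormOneClass 𝔸] {x y : 𝔸} {D : ℝ}
    (hx : ‖x‖ ≤ D) (hy : ‖y‖ ≤ D) (hD : 1 ≤ D) :
    ∀ j : ℕ, ‖x ^ j - y ^ j‖ ≤ j * D ^ j * ‖x - y‖ := by
  intro j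
  induction j with
  | zero => simp
  | succ j ih =>
    have hDpos : (0:ℝ) < D := lt_of_lt_of_le one_pos hD
    have key : x ^ (j+1) - y ^ (j+1) = x ^ j * (x - y) + (x ^ j - y ^ j) * y := by
      rw [pow_succ, pow_succ]
      noncomm_ring
    calc ‖x ^ (j+1) - y ^ (j+1)‖
        ≤ ‖x ^ j * (x - y)‖ + ‖(x ^ j - y ^ j) * y‖ := by rw [key]; exact norm_add_le _ _
      _ ≤ ‖x‖ ^ j * ‖x - y‖ + (j * D ^ j * ‖x - y‖) * D := by
          gcongr
          · exact (norm_mul_le _ _).trans (by gcongr; exact norm_pow_le _ _)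
          · exact (norm_mul_le _ _).trans (by gcongr)
      _ ≤ D ^ j * ‖x - y‖ + (j * D ^ j * ‖x - y‖) * D := by
          gcongr
      _ ≤ (↑(j+1) : ℝ) * D ^ (j+1) * ‖x - y‖ := by
          push_cast
          rw [pow_succ]
          nlinarith [mul_nonneg (mul_nonneg (sub_nonneg.2 hD) (pow_nonneg hDpos.le j))
            (norm_nonneg (x - y))]

lemma trotter (A B : Matrix N N ℂ) :
    Tendsto (fun k : ℕ => (exp ((k:ℂ)⁻¹ • A) * exp ((k:ℂ)⁻¹ • B)) ^ k)
      atTop (nhds (exp (A + B))) := by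
  letI : SeminormedRing (Matrix N N ℂ) := Matrix.linftyOpSemiNormedRing
  letI : NormedRing (Matrix N N ℂ) := Matrix.linftyOpNormedRing
  letI : NormedAlgebra ℂ (Matrix N N ℂ) := Matrix.linftyOpNormedAlgebra
  haveI : NormOneClass (Matrix N N ℂ) := Matrix.linfty_opNormOneClass
  -- the difference function
  set f : ℂ → Matrix N N ℂ :=
    fun z => exp (z • (A + B)) - exp (z • A) * exp (z • B) with hf
  have d1 : HasDerivAt (fun z : ℂ => exp (z • (A + B))) (A + B) 0 := by
    have := hasDerivAt_exp_smul_const (𝕂 := ℂ) (A + B) (0:ℂ)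
    simp only [zero_smul, exp_zero, one_mul] at this
    exact this
  have d2 : HasDerivAt (fun z : ℂ => exp (z • A)) A 0 := by
    have := hasDerivAt_exp_smul_const (𝕂 := ℂ) A (0:ℂ)
    simp only [zero_smul, exp_zero, one_mul] at this
    exact this
  have d3 : HasDerivAt (fun z : ℂ => exp (z • B)) B 0 := by
    have := hasDerivAt_exp_smul_const (𝕂 := ℂ) B (0:ℂ)
    simp only [zero_smul, exp_zero, one_mul] at this
    exact this
  have d4 : HasDerivAt f 0 0 := by
    have := d1.sub (d2.mul d3)
    simp only [zero_smul, exp_zero, one_mul, mul_one, sub_self, add_sub_cancel_right, sub_eq_zero] at this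
    exact this
  have hf0 : f 0 = 0 := by simp [hf]
  have hlo : f =o[nhds (0:ℂ)] (fun z => z) := by
    have := d4.isLittleO
    simpa [hf0] using this
  set c : ℝ := ‖A‖ + ‖B‖ with hc
  have hc0 : 0 ≤ c := by positivity
  have key : ∀ k : ℕ, 1 ≤ k →
      ‖(exp ((k:ℂ)⁻¹ • A) * exp ((k:ℂ)⁻¹ • B)) ^ k - exp (A + B)‖ ≤
        ((k:ℝ) * ‖f ((k:ℂ)⁻¹)‖) * Real.exp c := by
    intro k hk
    have hk0 : (k:ℝ) ≠ 0 := Nat.cast_ne_zero.2 (by omega)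
    set z : ℂ := (k:ℂ)⁻¹ with hzdef
    have hz : ‖z‖ = (k:ℝ)⁻¹ := by
      rw [hzdef, norm_inv]
      simp
    have hSk : exp (z • (A + B)) ^ k = exp (A + B) := by
      rw [← Matrix.exp_nsmul]
      congr 1
      rw [← Nat.cast_smul_eq_nsmul ℂ, smul_smul, hzdef, mul_inv_cancel₀ (by exact_mod_cast hk0),
        one_smul]
    set D : ℝ := Real.exp ((k:ℝ)⁻¹ * c) with hD
    have hD1 : (1:ℝ) ≤ D := Real.one_le_exp (by positivity)
    have hnk : ∀ M : Matrix N N ℂ, ‖z • M‖ = (k:ℝ)⁻¹ * ‖M‖ := fun M => by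
      rw [norm_smul, hz]
    have hx : ‖exp (z • A) * exp (z • B)‖ ≤ D := by
      calc ‖exp (z • A) * exp (z • B)‖ ≤ ‖exp (z • A)‖ * ‖exp (z • B)‖ :=
            norm_mul_le _ _
        _ ≤ Real.exp ‖z • A‖ * Real.exp ‖z • B‖ := by
            gcongr <;> [exact norm_exp_le_exp_norm' _; exact norm_exp_le_exp_norm' _]
        _ = Real.exp (‖z • A‖ + ‖z • B‖) := (Real.exp_add _ _).symm
        _ ≤ D := by
            rw [hD]
            apply Real.exp_le_exp.2
            rw [hnk, hnk, hc, mul_add]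
    have hy : ‖exp (z • (A + B))‖ ≤ D := by
      refine (norm_exp_le_exp_norm' _).trans ?_
      apply Real.exp_le_exp.2
      rw [hnk, hc]
      have := norm_add_le A B
      have h2 : (0:ℝ) ≤ (k:ℝ)⁻¹ := by positivity
      nlinarith
    have hDk : D ^ k = Real.exp c := by
      rw [hD, ← Real.exp_nat_mul]
      congr 1
      field_simp
    calc ‖(exp (z • A) * exp (z • B)) ^ k - exp (A + B)‖
        = ‖(exp (z • A) * exp (z • B)) ^ k - exp (z • (A + B)) ^ k‖ := by rw [hSk]
      _ ≤ (k:ℝ) * D ^ k * ‖exp (z • A) * exp (z • B) - exp (z • (A + B))‖ :=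
          pow_sub_pow_norm_le' hx hy hD1 k
      _ = ((k:ℝ) * ‖f z‖) * Real.exp c := by
          rw [hDk, ← norm_sub_rev]
          show (k:ℝ) * Real.exp c * ‖f z‖ = (k:ℝ) * ‖f z‖ * Real.exp c
          ring
  have hz0 : Tendsto (fun k : ℕ => ((k:ℂ))⁻¹) atTop (nhds 0) := by
    have h1 : Tendsto (fun k : ℕ => ((k:ℝ))⁻¹) atTop (nhds 0) :=
      tendsto_inv_atTop_nhds_zero_nat
    have h2 := (Complex.continuous_ofReal.tendsto 0).comp h1
    have h3 := h2.congr fun k : ℕ =>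
      show ((((k:ℝ))⁻¹ : ℝ) : ℂ) = ((k:ℂ))⁻¹ by push_cast; ring
    simpa using h3
  have hg : Tendsto (fun k : ℕ => ((k:ℝ) * ‖f ((k:ℂ)⁻¹)‖) * Real.exp c) atTop (nhds 0) := by
    have hlo2 := hlo.comp_tendsto hz0
    rw [NormedAddCommGroup.tendsto_nhds_zero]
    intro ε hε
    have hepos : 0 < Real.exp c := Real.exp_pos c
    have hε' : 0 < ε / (2 * Real.exp c) := by positivity
    have hev := (Asymptotics.isLittleO_iff.1 hlo2) hε'
    filter_upwards [hev, eventually_ge_atTop 1] with k hk hk1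
    have hk0 : (k:ℝ) ≠ 0 := Nat.cast_ne_zero.2 (by omega)
    have hzn : ‖(k:ℂ)⁻¹‖ = (k:ℝ)⁻¹ := by rw [norm_inv]; simp
    have hfk : ‖f ((k:ℂ)⁻¹)‖ ≤ ε / (2 * Real.exp c) * (k:ℝ)⁻¹ := by
      simpa [Function.comp, hzn] using hk
    have h0 : (0:ℝ) ≤ (k:ℝ) * ‖f ((k:ℂ)⁻¹)‖ * Real.exp c := by positivity
    rw [Real.norm_eq_abs, abs_of_nonneg h0]
    have : (k:ℝ) * ‖f ((k:ℂ)⁻¹)‖ * Real.exp c ≤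
        (k:ℝ) * (ε / (2 * Real.exp c) * (k:ℝ)⁻¹) * Real.exp c := by
      gcongr
    refine lt_of_le_of_lt this ?_
    have heq : (k:ℝ) * (ε / (2 * Real.exp c) * (k:ℝ)⁻¹) * Real.exp c = ε / 2 := by
      field_simp
    rw [heq]
    linarith
  refine tendsto_iff_norm_sub_tendsto_zero.2 ?_
  apply squeeze_zero' (g := fun k : ℕ => ((k:ℝ) * ‖f ((k:ℂ)⁻¹)‖) * Real.exp c)
  · exact Eventually.of_forall fun k => norm_nonneg _
  · filter_upwards [eventually_ge_atTop 1] with k hk using key k hk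
  · exact hg


end TrotterAux
section Choi
open NormedSpace Filter


variable {n : ℕ}

lemma apply_eq_sum (Φ : Matrix (Fin n) (Fin n) ℂ →ₗ[ℂ] Matrix (Fin n) (Fin n) ℂ)
    (A : Matrix (Fin n) (Fin n) ℂ) :
    Φ A = ∑ a, ∑ b, A a b • Φ (Matrix.single a b 1) := by
  conv_lhs => rw [Matrix.matrix_eq_sum_single A]
  rw [map_sum]
  refine Finset.sum_congr rfl fun a _ => ?_
  rw [map_sum]
  refine Finset.sum_congr rfl fun b _ => ?_
  rw [← Φ.map_smul]
  congr 1
  rw [Matrix.smul_single, smul_eq_mul, mul_one]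

lemma choi_entry (Φ : Matrix (Fin n) (Fin n) ℂ →ₗ[ℂ] Matrix (Fin n) (Fin n) ℂ)
    (A : Matrix (Fin n) (Fin n) ℂ) (c d : Fin n) :
    Φ A c d = ∑ a, ∑ b, A a b * ChoiMatrix Φ (a, c) (b, d) := by
  conv_lhs => rw [apply_eq_sum Φ A]
  rw [Matrix.sum_apply]
  refine Finset.sum_congr rfl fun a _ => ?_
  rw [Matrix.sum_apply]
  refine Finset.sum_congr rfl fun b _ => ?_
  simp [ChoiMatrix, Matrix.smul_apply, smul_eq_mul]

/-- A Kraus decomposition. -/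
def HasKraus {n : ℕ} (Φ : Matrix (Fin n) (Fin n) ℂ →ₗ[ℂ] Matrix (Fin n) (Fin n) ℂ) : Prop :=
  ∃ (m : ℕ) (K : Fin m → Matrix (Fin n) (Fin n) ℂ),
    ∀ A, Φ A = ∑ r, K r * A * (K r)ᴴ

lemma IsCompletelyPositive.hasKraus {Φ : Matrix (Fin n) (Fin n) ℂ →ₗ[ℂ] Matrix (Fin n) (Fin n) ℂ}
    (h : IsCompletelyPositive Φ) : HasKraus Φ := by
  open scoped MatrixOrder in
  obtain ⟨B, hB⟩ := CStarAlgebra.nonneg_iff_eq_star_mul_self.mp (Matrix.PosSemidef.nonneg h)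
  refine ⟨n * n, fun i => Matrix.of fun c a => star (B (finProdFinEquiv.symm i) (a, c)), fun A => ?_⟩
  refine Eq.trans ?_ ((Equiv.sum_comp (finProdFinEquiv (m := n) (n := n)).symm
    (fun p => (Matrix.of fun c a => star (B p (a, c))) * A *
      (Matrix.of fun c a => star (B p (a, c)))ᴴ)).symm)
  ext c d
  rw [choi_entry Φ A c d, hB, Matrix.star_eq_conjTranspose, Matrix.sum_apply]
  simp only [Matrix.mul_apply, Matrix.conjTranspose_apply, Matrix.of_apply, star_star,
    Finset.sum_mul, Finset.mul_sum]
  conv_lhs => enter [2, a]; rw [Finset.sum_comm]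
  conv_lhs => rw [Finset.sum_comm]
  conv_rhs => enter [2, p]; rw [Finset.sum_comm]
  exact Finset.sum_congr rfl fun p _ => Finset.sum_congr rfl fun a _ =>
    Finset.sum_congr rfl fun b _ => by ring

lemma HasKraus.isCompletelyPositive
    {Φ : Matrix (Fin n) (Fin n) ℂ →ₗ[ℂ] Matrix (Fin n) (Fin n) ℂ}
    (h : HasKraus Φ) : IsCompletelyPositive Φ := by
  obtain ⟨m, K, hK⟩ := h
  have : ChoiMatrix Φ = (Matrix.of fun (r : Fin m) (p : Fin n × Fin n) => star (K r p.2 p.1))ᴴ *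
      (Matrix.of fun (r : Fin m) (p : Fin n × Fin n) => star (K r p.2 p.1)) := by
    ext ⟨a, c⟩ ⟨b, d⟩
    show Φ (Matrix.single a b 1) c d = _
    rw [hK]
    simp only [Matrix.sum_apply, Matrix.mul_apply, Matrix.conjTranspose_apply, Matrix.of_apply,
      star_star, Matrix.single, Matrix.of_apply]
    refine Finset.sum_congr rfl fun r _ => ?_
    rw [Finset.sum_eq_single b]
    · rw [Finset.sum_eq_single a]
      · simp
      · intro x _ hx; simp [Ne.symm hx]
      · intro h; exact absurd (Finset.mem_univ a) h
    · intro x _ hx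
      rw [Finset.sum_eq_zero, zero_mul]
      intro y _
      simp [Ne.symm hx]
    · intro h; exact absurd (Finset.mem_univ b) h
  rw [IsCompletelyPositive, this]
  exact Matrix.posSemidef_conjTranspose_mul_self _

lemma HasKraus.comp {Φ Ψ : Matrix (Fin n) (Fin n) ℂ →ₗ[ℂ] Matrix (Fin n) (Fin n) ℂ}
    (hΦ : HasKraus Φ) (hΨ : HasKraus Ψ) : HasKraus (Φ ∘ₗ Ψ) := by
  obtain ⟨m1, K, hK⟩ := hΦ
  obtain ⟨m2, J, hJ⟩ := hΨ
  refine ⟨m1 * m2, fun i => K (finProdFinEquiv.symm i).1 * J (finProdFinEquiv.symm i).2,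
    fun A => ?_⟩
  refine Eq.trans ?_ ((Equiv.sum_comp (finProdFinEquiv (m := m1) (n := m2)).symm
    (fun rs => (K rs.1 * J rs.2) * A * (K rs.1 * J rs.2)ᴴ)).symm)
  rw [LinearMap.comp_apply, hJ, map_sum, Fintype.sum_prod_type]
  rw [Finset.sum_comm]
  refine Finset.sum_congr rfl fun s _ => ?_
  rw [hK]
  refine Finset.sum_congr rfl fun r _ => ?_
  simp [Matrix.conjTranspose_mul, Matrix.mul_assoc]

lemma hasKraus_id : HasKraus (LinearMap.id : Matrix (Fin n) (Fin n) ℂ →ₗ[ℂ] _) :=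
  ⟨1, fun _ => 1, fun A => by simp⟩

end Choi

section Good

variable {n : ℕ}

/-- The combined property: positive, trace-preserving, unital. -/
def GoodMap (Φ : Matrix (Fin n) (Fin n) ℂ →ₗ[ℂ] Matrix (Fin n) (Fin n) ℂ) : Prop :=
  IsPositiveMap Φ ∧ IsTracePreserving Φ ∧ Φ 1 = 1

lemma GoodMap.comp {Φ Ψ : Matrix (Fin n) (Fin n) ℂ →ₗ[ℂ] Matrix (Fin n) (Fin n) ℂ}
    (hΦ : GoodMap Φ) (hΨ : GoodMap Ψ) : GoodMap (Φ ∘ₗ Ψ) := by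
  refine ⟨fun A hA => hΦ.1 _ (hΨ.1 A hA), fun A => ?_, ?_⟩
  · rw [LinearMap.comp_apply, hΦ.2.1, hΨ.2.1]
  · rw [LinearMap.comp_apply, hΨ.2.2, hΦ.2.2]

lemma goodMap_id : GoodMap (LinearMap.id : Matrix (Fin n) (Fin n) ℂ →ₗ[ℂ] _) :=
  ⟨fun _ h => h, fun _ => rfl, rfl⟩

/-- closedness of the positive semidefinite matrices -/
lemma isClosed_posSemidef {m : Type*} [Fintype m] :
    IsClosed {B : Matrix m m ℂ | B.PosSemidef} := by
  have hnn : IsClosed {z : ℂ | 0 ≤ z} := by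
    have : {z : ℂ | 0 ≤ z} = Complex.re ⁻¹' Set.Ici 0 ∩ Complex.im ⁻¹' {0} := by
      ext z
      simp only [Set.mem_setOf_eq, Set.mem_inter_iff, Set.mem_preimage, Set.mem_Ici,
        Set.mem_singleton_iff, Complex.le_def, Complex.zero_re, Complex.zero_im]
      tauto
    rw [this]
    exact (isClosed_Ici.preimage Complex.continuous_re).inter
      (isClosed_singleton.preimage Complex.continuous_im)
  have : {B : Matrix m m ℂ | B.PosSemidef} =
      {B : Matrix m m ℂ | Bᴴ = B} ∩
        ⋂ x : m → ℂ, {B : Matrix m m ℂ | 0 ≤ dotProduct (star x) (B.mulVec x)} := by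
    ext B
    simp only [Set.mem_setOf_eq, Set.mem_inter_iff, Set.mem_iInter]
    exact Matrix.posSemidef_iff_dotProduct_mulVec
  rw [this]
  refine (isClosed_eq continuous_id.matrix_conjTranspose continuous_id).inter
    (isClosed_iInter fun x => ?_)
  have hcont : Continuous fun B : Matrix m m ℂ =>
      dotProduct (star x) (B.mulVec x) :=
    continuous_const.dotProduct (continuous_id.matrix_mulVec continuous_const)
  exact hnn.preimage hcont

end Good

section MatrixLevel

variable {n : ℕ}

noncomputable abbrev sb (n : ℕ) := Matrix.stdBasis ℂ (Fin n) (Fin n)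

noncomputable abbrev tl (M : Matrix (Fin n × Fin n) (Fin n × Fin n) ℂ) :
    Matrix (Fin n) (Fin n) ℂ →ₗ[ℂ] Matrix (Fin n) (Fin n) ℂ :=
  Matrix.toLin (sb n) (sb n) M

lemma tl_mul (M M' : Matrix (Fin n × Fin n) (Fin n × Fin n) ℂ) :
    tl (M * M') = tl M ∘ₗ tl M' :=
  Matrix.toLin_mul (sb n) (sb n) (sb n) M M'

lemma tl_one : tl (1 : Matrix (Fin n × Fin n) (Fin n × Fin n) ℂ) = LinearMap.id :=
  Matrix.toLin_one (sb n)

/-- evaluation of `tl` at a fixed matrix, as a linear map -/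
noncomputable def tlApply (A : Matrix (Fin n) (Fin n) ℂ) :
    Matrix (Fin n × Fin n) (Fin n × Fin n) ℂ →ₗ[ℂ] Matrix (Fin n) (Fin n) ℂ :=
  (LinearMap.applyₗ A).comp (Matrix.toLin (sb n) (sb n)).toLinearMap

lemma tlApply_apply (A : Matrix (Fin n) (Fin n) ℂ)
    (M : Matrix (Fin n × Fin n) (Fin n × Fin n) ℂ) : tlApply A M = tl M A := rfl

lemma continuous_tlApply (A : Matrix (Fin n) (Fin n) ℂ) :
    Continuous fun M : Matrix (Fin n × Fin n) (Fin n × Fin n) ℂ => tl M A := by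
  have := (tlApply (n := n) A).continuous_of_finiteDimensional
  exact this

/-- the Choi matrix as a linear map -/
noncomputable def choiL :
    (Matrix (Fin n) (Fin n) ℂ →ₗ[ℂ] Matrix (Fin n) (Fin n) ℂ) →ₗ[ℂ]
      Matrix (Fin n × Fin n) (Fin n × Fin n) ℂ where
  toFun := ChoiMatrix
  map_add' Φ Ψ := by
    ext ⟨a, c⟩ ⟨b, d⟩
    simp [ChoiMatrix]
  map_smul' z Φ := by
    ext ⟨a, c⟩ ⟨b, d⟩
    simp [ChoiMatrix]

lemma isClosed_goodM :
    IsClosed {M : Matrix (Fin n × Fin n) (Fin n × Fin n) ℂ | GoodMap (tl M)} := by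
  have : {M : Matrix (Fin n × Fin n) (Fin n × Fin n) ℂ | GoodMap (tl M)} =
      (⋂ A : {A : Matrix (Fin n) (Fin n) ℂ // A.PosSemidef},
        {M | (tl M A.1).PosSemidef}) ∩
      ((⋂ A : Matrix (Fin n) (Fin n) ℂ, {M | (tl M A).trace = A.trace}) ∩
        {M | tl M (1 : Matrix (Fin n) (Fin n) ℂ) = 1}) := by
    ext M
    simp only [Set.mem_setOf_eq, Set.mem_inter_iff, Set.mem_iInter, Subtype.forall]
    exact Iff.rfl
  rw [this]
  refine IsClosed.inter (isClosed_iInter fun A => isClosed_posSemidef.preimage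
    (continuous_tlApply A.1)) (IsClosed.inter (isClosed_iInter fun A => ?_) ?_)
  · exact isClosed_eq (((Matrix.traceLinearMap (Fin n) ℂ ℂ).comp
      (tlApply A)).continuous_of_finiteDimensional) continuous_const
  · exact isClosed_eq (continuous_tlApply 1) continuous_const

lemma isClosed_cpM :
    IsClosed {M : Matrix (Fin n × Fin n) (Fin n × Fin n) ℂ | IsCompletelyPositive (tl M)} := by
  have : {M : Matrix (Fin n × Fin n) (Fin n × Fin n) ℂ | IsCompletelyPositive (tl M)} =
      (fun M => choiL (tl M)) ⁻¹' {C | C.PosSemidef} := rfl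
  rw [this]
  exact isClosed_posSemidef.preimage
    (LinearMap.continuous_of_finiteDimensional
      (choiL.comp (Matrix.toLin (sb n) (sb n)).toLinearMap))

end MatrixLevel


section ConeKey
open NormedSpace Filter

lemma cone_key {N : Type*} [Fintype N] [DecidableEq N] [Nonempty N]
    {P : Matrix N N ℂ → Prop} (h1 : P 1)
    (hmul : ∀ {M M'}, P M → P M' → P (M * M'))
    (hclosed : IsClosed {M | P M}) {A B : Matrix N N ℂ}
    (hA : ∀ s : ℝ, 0 ≤ s → P (exp (((s:ℝ):ℂ) • A)))
    (hB : ∀ s : ℝ, 0 ≤ s → P (exp (((s:ℝ):ℂ) • B))) :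
    P (exp (A + B)) := by
  have hpow : ∀ (X : Matrix N N ℂ), P X → ∀ j : ℕ, P (X ^ j) := by
    intro X hX j
    induction j with
    | zero => simpa using h1
    | succ j ih => rw [pow_succ]; exact hmul ih hX
  have hTk : ∀ k : ℕ, P ((exp ((k:ℂ)⁻¹ • A) * exp ((k:ℂ)⁻¹ • B)) ^ k) := by
    intro k
    have e : (((k:ℝ)⁻¹ : ℝ) : ℂ) = ((k:ℂ))⁻¹ := by push_cast; ring
    have hsA := hA (k:ℝ)⁻¹ (by positivity)
    have hsB := hB (k:ℝ)⁻¹ (by positivity)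
    rw [e] at hsA hsB
    exact hpow _ (hmul hsA hsB) k
  exact hclosed.mem_of_tendsto (trotter A B) (Eventually.of_forall fun k => hTk k)

end ConeKey
open NormedSpace in
/-- The generators of semigroups of positive, trace-preserving, unital
maps form a convex cone; the generators of semigroups of completely positive,
trace-preserving, unital maps form a convex cone contained in it. -/
theorem generators_form_convex_cone {n : ℕ} (hn : 1 ≤ n) :
    (∀ L₁ L₂ : Matrix (Fin n) (Fin n) ℂ →ₗ[ℂ] Matrix (Fin n) (Fin n) ℂ,
      InGenCone L₁ → InGenCone L₂ → ∀ a b : ℝ, 0 ≤ a → 0 ≤ b →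
        InGenCone (a • L₁ + b • L₂)) ∧
    (∀ L₁ L₂ : Matrix (Fin n) (Fin n) ℂ →ₗ[ℂ] Matrix (Fin n) (Fin n) ℂ,
      InGenConeCP L₁ → InGenConeCP L₂ → ∀ a b : ℝ, 0 ≤ a → 0 ≤ b →
        InGenConeCP (a • L₁ + b • L₂)) ∧
    (∀ L : Matrix (Fin n) (Fin n) ℂ →ₗ[ℂ] Matrix (Fin n) (Fin n) ℂ,
      InGenConeCP L → InGenCone L) := by
  classical
  haveI : Nonempty (Fin n) := ⟨⟨0, hn⟩⟩
  have hsmul : ∀ (s : ℝ) (L : Matrix (Fin n) (Fin n) ℂ →ₗ[ℂ] Matrix (Fin n) (Fin n) ℂ),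
      s • L = ((s:ℝ):ℂ) • L := fun s L => (Complex.coe_smul s L).symm
  have hrep : ∀ (L : Matrix (Fin n) (Fin n) ℂ →ₗ[ℂ] Matrix (Fin n) (Fin n) ℂ) (s : ℝ),
      expEnd (s • L) = tl (exp (((s:ℝ):ℂ) • (LinearMap.toMatrix (sb n) (sb n) L))) := by
    intro L s
    show Matrix.toLin (sb n) (sb n)
        (exp (LinearMap.toMatrix (sb n) (sb n) (s • L))) = _
    rw [hsmul s L, map_smul]
  have main : ∀ (PP : (Matrix (Fin n) (Fin n) ℂ →ₗ[ℂ] Matrix (Fin n) (Fin n) ℂ) → Prop),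
      (PP LinearMap.id) →
      (∀ {Φ Ψ}, PP Φ → PP Ψ → PP (Φ ∘ₗ Ψ)) →
      (IsClosed {M : Matrix (Fin n × Fin n) (Fin n × Fin n) ℂ | PP (tl M)}) →
      ∀ L₁ L₂ : Matrix (Fin n) (Fin n) ℂ →ₗ[ℂ] Matrix (Fin n) (Fin n) ℂ,
      (∀ t : ℝ, 0 ≤ t → PP (expEnd (t • L₁))) →
      (∀ t : ℝ, 0 ≤ t → PP (expEnd (t • L₂))) →
      ∀ a b : ℝ, 0 ≤ a → 0 ≤ b → ∀ t : ℝ, 0 ≤ t →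
      PP (expEnd (t • (a • L₁ + b • L₂))) := by
    intro PP hid hcomp hclosed L₁ L₂ h1 h2 a b ha hb t ht
    set M₁ := LinearMap.toMatrix (sb n) (sb n) L₁ with hM₁
    set M₂ := LinearMap.toMatrix (sb n) (sb n) L₂ with hM₂
    have hrw : ((t:ℝ):ℂ) • (LinearMap.toMatrix (sb n) (sb n) (a • L₁ + b • L₂)) =
        (((t*a : ℝ)):ℂ) • M₁ + (((t*b : ℝ)):ℂ) • M₂ := by
      rw [map_add, hsmul a L₁, hsmul b L₂, map_smul, map_smul, smul_add,
        smul_smul, smul_smul]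
      push_cast
      try rfl
    have hA' : ∀ s : ℝ, 0 ≤ s → PP (tl (exp (((s:ℝ):ℂ) • ((((t*a : ℝ)):ℂ) • M₁)))) := by
      intro s hs
      have e : ((s:ℝ):ℂ) • ((((t*a : ℝ)):ℂ) • M₁) = (((s*(t*a) : ℝ)):ℂ) • M₁ := by
        rw [smul_smul]
        push_cast
        try ring_nf
      rw [e]
      have h := h1 (s*(t*a)) (by positivity)
      rwa [hrep] at h
    have hB' : ∀ s : ℝ, 0 ≤ s → PP (tl (exp (((s:ℝ):ℂ) • ((((t*b : ℝ)):ℂ) • M₂)))) := by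
      intro s hs
      have e : ((s:ℝ):ℂ) • ((((t*b : ℝ)):ℂ) • M₂) = (((s*(t*b) : ℝ)):ℂ) • M₂ := by
        rw [smul_smul]
        push_cast
        try ring_nf
      rw [e]
      have h := h2 (s*(t*b)) (by positivity)
      rwa [hrep] at h
    have key := cone_key (P := fun M => PP (tl M))
      (by show PP (tl 1); rw [tl_one]; exact hid)
      (fun {M M'} hM hM' => by show PP (tl (M * M')); rw [tl_mul]; exact hcomp hM hM')
      hclosed hA' hB'
    rw [hrep (a • L₁ + b • L₂) t, hrw]
    exact key
  refine ⟨?_, ?_, fun L h => h.1⟩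
  · intro L₁ L₂ h1 h2 a b ha hb t ht
    exact main (fun Φ => GoodMap Φ) goodMap_id (fun h h' => h.comp h') isClosed_goodM
      L₁ L₂ (fun s hs => h1 s hs) (fun s hs => h2 s hs) a b ha hb t ht
  · intro L₁ L₂ h1 h2 a b ha hb
    have hmain := main (fun Φ => GoodMap Φ ∧ IsCompletelyPositive Φ)
      ⟨goodMap_id, hasKraus_id.isCompletelyPositive⟩
      (fun h h' => ⟨h.1.comp h'.1, (h.2.hasKraus.comp h'.2.hasKraus).isCompletelyPositive⟩)
      (isClosed_goodM.inter isClosed_cpM)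
      L₁ L₂ (fun s hs => ⟨h1.1 s hs, h1.2 s hs⟩) (fun s hs => ⟨h2.1 s hs, h2.2 s hs⟩)
      a b ha hb
    exact ⟨fun t ht => (hmain t ht).1, fun t ht => (hmain t ht).2⟩
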